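/- Let m ≥ 1 be an integer, and let ρ_i ∈ ℂ (for 1 ≤ i ≤ m) and μ_{i,j} ∈ ℂ (for 1 ≤ i < j ≤ m) be given. Define the complex matrix S indexed by Fin m × Fin m by S = Σ_{i<j} ρ_i (E_{ii} ⊗ₖ E_{jj}) + μ_{i,j} (E_{ji} ⊗ₖ E_{ij}), where E_{ij} are the matrix units of m×m matrices and ⊗ₖ is the Kronecker product. Then S satisfies condition (E): S₂₃·S₁₂·(S₁₂+S₂₃) = (S₁₂+S₂₃)·S₂₃·S₁₂, where S₁₂ = S ⊗ₖ 1ₘ and S₂₃ = 1ₘ ⊗ₖ S. -/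

import Mathlib

open Matrix Kronecker

/-- `S ⊗ₖ 1ₘ`, reindexed to act on `ℂ^m ⊗ ℂ^m ⊗ ℂ^m`. -/
noncomputable def kron12 {m : ℕ} (S : Matrix (Fin m × Fin m) (Fin m × Fin m) ℂ) :
    Matrix (Fin m × Fin m × Fin m) (Fin m × Fin m × Fin m) ℂ :=
  Matrix.reindex (Equiv.prodAssoc (Fin m) (Fin m) (Fin m))
    (Equiv.prodAssoc (Fin m) (Fin m) (Fin m)) (S ⊗ₖ (1 : Matrix (Fin m) (Fin m) ℂ))

/-- `1ₘ ⊗ₖ S`, acting on `ℂ^m ⊗ ℂ^m ⊗ ℂ^m`. -/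
noncomputable def kron23 {m : ℕ} (S : Matrix (Fin m × Fin m) (Fin m × Fin m) ℂ) :
    Matrix (Fin m × Fin m × Fin m) (Fin m × Fin m × Fin m) ℂ :=
  (1 : Matrix (Fin m) (Fin m) ℂ) ⊗ₖ S

/-- The matrix `Σ_{i<j} ρ_i E_ii ⊗ E_jj + μ_{i,j} E_ji ⊗ E_ij` of
Proposition 4 (representation of the braid-like algebra `S_n`). -/
noncomputable def repS (m : ℕ) (ρ : Fin m → ℂ) (μ : Fin m → Fin m → ℂ) :
    Matrix (Fin m × Fin m) (Fin m × Fin m) ℂ :=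
  ∑ i : Fin m, ∑ j : Fin m,
    if i < j then
      ρ i • (Matrix.single i i (1 : ℂ) ⊗ₖ Matrix.single j j (1 : ℂ)) +
      μ i j • (Matrix.single j i (1 : ℂ) ⊗ₖ Matrix.single i j (1 : ℂ))
    else 0

/-- The matrix `Σ_{i<j} ζ_j E_ii ⊗ E_jj + ν_{i,j} E_ji ⊗ E_ij` of
Proposition 5 (representation of the braid-like algebra `T_n`). -/
noncomputable def repT (m : ℕ) (ζ : Fin m → ℂ) (ν : Fin m → Fin m → ℂ) :
    Matrix (Fin m × Fin m) (Fin m × Fin m) ℂ :=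
  ∑ i : Fin m, ∑ j : Fin m,
    if i < j then
      ζ j • (Matrix.single i i (1 : ℂ) ⊗ₖ Matrix.single j j (1 : ℂ)) +
      ν i j • (Matrix.single j i (1 : ℂ) ⊗ₖ Matrix.single i j (1 : ℂ))
    else 0

lemma repS_apply (m : ℕ) (ρ : Fin m → ℂ) (μ : Fin m → Fin m → ℂ) (a b c d : Fin m) :
    repS m ρ μ (a, b) (c, d) =
      (if a < b ∧ c = a ∧ d = b then ρ a else 0) +
      (if b < a ∧ c = b ∧ d = a then μ b a else 0) := by
  classical
  have key : ∀ i j : Fin m,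
      (if i < j then
        ρ i • (Matrix.single i i (1 : ℂ) ⊗ₖ Matrix.single j j (1 : ℂ)) +
        μ i j • (Matrix.single j i (1 : ℂ) ⊗ₖ Matrix.single i j (1 : ℂ))
      else 0) (a, b) (c, d)
      = (if i = a then if j = b then (if a < b ∧ c = a ∧ d = b then ρ a else 0) else 0 else 0)
      + (if i = b then if j = a then (if b < a ∧ c = b ∧ d = a then μ b a else 0) else 0 else 0) := by
    intro i j
    by_cases h : i < j <;>
      simp [h, Matrix.single, Matrix.add_apply, Matrix.smul_apply,
        Matrix.kroneckerMap_apply] <;>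
      split_ifs <;> simp_all <;> ring_nf <;> omega
  unfold repS
  rw [Matrix.sum_apply]
  simp only [Matrix.sum_apply, key]
  simp [Finset.sum_add_distrib, Finset.sum_ite_eq']

lemma mul_row2 {n : Type*} [Fintype n] [DecidableEq n] (X Y : Matrix n n ℂ) (p t1 t2 : n)
    (v1 v2 : ℂ) (h : ∀ r, X p r = (if r = t1 then v1 else 0) + (if r = t2 then v2 else 0))
    (q : n) : (X * Y) p q = v1 * Y t1 q + v2 * Y t2 q := by
  simp [Matrix.mul_apply, h, add_mul, ite_mul, Finset.sum_add_distrib, Finset.sum_ite_eq']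

lemma mul_row4 {n : Type*} [Fintype n] [DecidableEq n] (X Y : Matrix n n ℂ)
    (p t1 t2 t3 t4 : n) (v1 v2 v3 v4 : ℂ)
    (h : ∀ r, X p r = (if r = t1 then v1 else 0) + (if r = t2 then v2 else 0)
      + (if r = t3 then v3 else 0) + (if r = t4 then v4 else 0)) (q : n) :
    (X * Y) p q = v1 * Y t1 q + v2 * Y t2 q + v3 * Y t3 q + v4 * Y t4 q := by
  simp [Matrix.mul_apply, h, add_mul, ite_mul, Finset.sum_add_distrib, Finset.sum_ite_eq']

variable {m : ℕ} (ρ : Fin m → ℂ) (μ : Fin m → Fin m → ℂ)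

lemma hrow12 (a b c : Fin m) (r : Fin m × Fin m × Fin m) :
    kron12 (repS m ρ μ) (a, b, c) r =
      (if r = (a, b, c) then (if a < b then ρ a else 0) else 0) +
      (if r = (b, a, c) then (if b < a then μ b a else 0) else 0) := by
  obtain ⟨d, e, f⟩ := r
  simp only [kron12, Matrix.reindex_apply, Matrix.submatrix_apply, Equiv.prodAssoc_symm_apply,
    Matrix.kroneckerMap_apply, repS_apply, Matrix.one_apply, Prod.mk.injEq]
  split_ifs <;> (try ring) <;> exfalso <;> casesm* _ ∧ _ <;> omega

lemma hrow23 (a b c : Fin m) (r : Fin m × Fin m × Fin m) :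
    kron23 (repS m ρ μ) (a, b, c) r =
      (if r = (a, b, c) then (if b < c then ρ b else 0) else 0) +
      (if r = (a, c, b) then (if c < b then μ c b else 0) else 0) := by
  obtain ⟨d, e, f⟩ := r
  simp only [kron23, Matrix.kroneckerMap_apply, repS_apply, Matrix.one_apply, Prod.mk.injEq]
  split_ifs <;> (try ring) <;> exfalso <;> casesm* _ ∧ _ <;> omega

lemma hrowsum (a b c : Fin m) (r : Fin m × Fin m × Fin m) :
    (kron12 (repS m ρ μ) + kron23 (repS m ρ μ)) (a, b, c) r =
      (if r = (a, b, c) then (if a < b then ρ a else 0) else 0) +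
      (if r = (b, a, c) then (if b < a then μ b a else 0) else 0) +
      (if r = (a, b, c) then (if b < c then ρ b else 0) else 0) +
      (if r = (a, c, b) then (if c < b then μ c b else 0) else 0) := by
  rw [Matrix.add_apply, hrow12, hrow23]; ring

lemma hrow2312 (a b c : Fin m) (r : Fin m × Fin m × Fin m) :
    (kron23 (repS m ρ μ) * kron12 (repS m ρ μ)) (a, b, c) r =
      (if r = (a, b, c) then (if b < c then ρ b else 0) * (if a < b then ρ a else 0) else 0) +
      (if r = (b, a, c) then (if b < c then ρ b else 0) * (if b < a then μ b a else 0) else 0) +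
      (if r = (a, c, b) then (if c < b then μ c b else 0) * (if a < c then ρ a else 0) else 0) +
      (if r = (c, a, b) then (if c < b then μ c b else 0) * (if c < a then μ c a else 0) else 0) := by
  rw [mul_row2 _ _ _ _ _ _ _ (hrow23 ρ μ a b c)]
  rw [hrow12, hrow12]
  simp only [mul_add, mul_ite, mul_zero]
  ring


set_option maxHeartbeats 2000000 in
/-- Proposition 4: the matrix `S = Σ_{i<j} ρ_i E_ii ⊗ E_jj + μ_{i,j} E_ji ⊗ E_ij`
satisfies condition (E), i.e. yields a representation of the braid-like
algebra `S_n`. -/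
theorem repS_satisfies_condE (m : ℕ) (hm : 1 ≤ m)
    (ρ : Fin m → ℂ) (μ : Fin m → Fin m → ℂ) :
    kron23 (repS m ρ μ) * kron12 (repS m ρ μ) * (kron12 (repS m ρ μ) + kron23 (repS m ρ μ)) =
      (kron12 (repS m ρ μ) + kron23 (repS m ρ μ)) * kron23 (repS m ρ μ) * kron12 (repS m ρ μ) := by
  ext ⟨a, b, c⟩ ⟨x, y, z⟩
  rw [mul_row4 _ _ _ _ _ _ _ _ _ _ _ (hrow2312 ρ μ a b c)]
  rw [Matrix.mul_assoc]
  rw [mul_row4 _ _ _ _ _ _ _ _ _ _ _ (hrowsum ρ μ a b c)]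
  rw [hrowsum ρ μ a b c (x, y, z), hrowsum ρ μ b a c (x, y, z), hrowsum ρ μ a c b (x, y, z),
    hrowsum ρ μ c a b (x, y, z)]
  rw [hrow2312 ρ μ a b c (x, y, z), hrow2312 ρ μ b a c (x, y, z), hrow2312 ρ μ a c b (x, y, z)]
  rcases lt_trichotomy a b with hab | hab | hab <;>
    rcases lt_trichotomy b c with hbc | hbc | hbc <;>
    rcases lt_trichotomy a c with hac | hac | hac <;>
      first
        | (exfalso; omega)
        | ((try subst hab); (try subst hbc); (try subst hac);
           simp_all only [lt_asymm, lt_irrefl, if_true, if_false, ite_true, ite_false,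
            Prod.mk.injEq, not_false_eq_true];
           split_ifs <;> (try ring) <;> exfalso <;> casesm* _ ∧ _ <;> omega)
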